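/- Let F_B, F_S : [0,1] → [0,1] be nondecreasing, let v ∈ [0,1], and define u_B(p) = (v − p)·F_B(p) and u_O(p) = (v − p)·F_B(p)·F_S(p) for p ∈ [0,1]. Let A_B (resp. A_O) be the set of maximizers of u_B (resp. u_O) over [0,1], and assume both are nonempty and admit greatest elements p_B^max and p_O^max. Then: (1) p_O^max ≥ p_B^max; (2) if in addition u_B(p_B^max) > 0 and F_S(p_B^max) > 0, then for every p ∈ [0, p_B^max], if p ∈ A_O then p ∈ A_B and F_S(p) = F_S(p_B^max). -/
import Mathlib


open Set

/-- **Optimal bids can only move upward under max-shilling.**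
With `u_B(p) = (v - p) F_B(p)` and `u_O(p) = (v - p) F_B(p) F_S(p)`, if the sets of
maximizers over `[0,1]` admit greatest elements `p_B^max` and `p_O^max`, then
`p_O^max ≥ p_B^max`, and (under positivity of `u_B(p_B^max)` and `F_S(p_B^max)`)
no new optimum can appear to the left of `p_B^max`. -/
theorem optima_under_shilling
    (FB FS : ℝ → ℝ) (v : ℝ)
    (hFBmono : MonotoneOn FB (Icc 0 1)) (hFSmono : MonotoneOn FS (Icc 0 1))
    (hFBrange : ∀ p ∈ Icc (0:ℝ) 1, FB p ∈ Icc (0:ℝ) 1)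
    (hFSrange : ∀ p ∈ Icc (0:ℝ) 1, FS p ∈ Icc (0:ℝ) 1)
    (hv : v ∈ Icc (0:ℝ) 1)
    (uB uO : ℝ → ℝ)
    (huB : ∀ p, uB p = (v - p) * FB p)
    (huO : ∀ p, uO p = (v - p) * FB p * FS p)
    (AB AO : Set ℝ)
    (hAB : AB = {p ∈ Icc (0:ℝ) 1 | ∀ q ∈ Icc (0:ℝ) 1, uB q ≤ uB p})
    (hAO : AO = {p ∈ Icc (0:ℝ) 1 | ∀ q ∈ Icc (0:ℝ) 1, uO q ≤ uO p})
    (pBmax pOmax : ℝ)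
    (hpBmax : IsGreatest AB pBmax) (hpOmax : IsGreatest AO pOmax) :
    pBmax ≤ pOmax ∧
    (0 < uB pBmax → 0 < FS pBmax →
      ∀ p ∈ Icc (0:ℝ) pBmax, p ∈ AO → p ∈ AB ∧ FS p = FS pBmax) := by
  subst hAB hAO
  obtain ⟨⟨hpB1, hBopt⟩, hBub⟩ := hpBmax
  obtain ⟨⟨hpO1, hOopt⟩, hOub⟩ := hpOmax
  have huBO : ∀ p, uO p = uB p * FS p := fun p => by rw [huO, huB]
  have h0 : (0:ℝ) ∈ Icc (0:ℝ) 1 := by norm_num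
  have huB0 : 0 ≤ uB pBmax := by
    have h00 : 0 ≤ uB 0 := by
      rw [huB]; exact mul_nonneg (by simpa using hv.1) (hFBrange 0 h0).1
    exact h00.trans (hBopt 0 h0)
  have hmain : pBmax ≤ pOmax := by
    by_contra h
    push_neg at h
    have hFSle : FS pOmax ≤ FS pBmax := hFSmono hpO1 hpB1 h.le
    have hkey : uO pOmax ≤ uO pBmax := by
      rw [huBO, huBO]
      exact mul_le_mul (hBopt pOmax hpO1) hFSle (hFSrange pOmax hpO1).1 huB0
    have hmem : pBmax ∈ {p ∈ Icc (0:ℝ) 1 | ∀ q ∈ Icc (0:ℝ) 1, uO q ≤ uO p} :=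
      ⟨hpB1, fun q hq => (hOopt q hq).trans hkey⟩
    exact absurd (hOub hmem) (not_le.mpr h)
  refine ⟨hmain, fun hupos hFSpos p hp hpAO => ?_⟩
  obtain ⟨hp1, hpopt⟩ := hpAO
  have hple : p ≤ pBmax := hp.2
  have hFSple : FS p ≤ FS pBmax := hFSmono hp1 hpB1 hple
  have hFSp0 : 0 ≤ FS p := (hFSrange p hp1).1
  have huBple : uB p ≤ uB pBmax := hBopt p hp1
  have hOp : uB pBmax * FS pBmax ≤ uB p * FS p := by
    have := hpopt pBmax hpB1
    rwa [huBO, huBO] at this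
  have h2 : uB p * FS p ≤ uB pBmax * FS p :=
    mul_le_mul_of_nonneg_right huBple hFSp0
  have hFSeq : FS p = FS pBmax := by
    have h4 : uB pBmax * FS pBmax ≤ uB pBmax * FS p := hOp.trans h2
    have := le_of_mul_le_mul_left h4 hupos
    linarith
  have hFSppos : 0 < FS p := hFSeq ▸ hFSpos
  have huBeq : uB p = uB pBmax := by
    have h5 := hOp
    rw [← hFSeq] at h5
    have := le_of_mul_le_mul_right h5 hFSppos
    linarith
  exact ⟨⟨hp1, fun q hq => (hBopt q hq).trans_eq huBeq.symm⟩, hFSeq⟩
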